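/- Let G = (V, E) be a directed graph with reachability relation R⁺, let V' ⊆ V, and let G' be the sub-graph on V' whose edge set is {(u,v) ∈ V'×V' | (u,v) ∈ R⁺}. Suppose H is any graph on V' with the same reachability relation as G' (e.g., a transitive reduction of G'). Then for any set of new edges F ⊆ V' × V', adding F to G creates a directed cycle among vertices of V' if and only if adding F to H creates a directed cycle. -/

import Mathlib

private lemma tg_mono' {V : Type*} {r s : V → V → Prop}
    (h : ∀ a b, r a b → Relation.TransGen s a b) :
    ∀ {x y}, Relation.TransGen r x y → Relation.TransGen s x y := by
  intro x y ht
  induction ht with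
  | single h' => exact h _ _ h'
  | tail _ h' ih => exact ih.trans (h _ _ h')

private lemma key_decomp {V : Type*} (E : V → V → Prop) (V' : Set V)
    (F : V → V → Prop) (hF : ∀ a b, F a b → a ∈ V' ∧ b ∈ V') :
    ∀ {x y}, Relation.TransGen (fun a b => E a b ∨ F a b) x y → x ∈ V' →
      (∃ z ∈ V', Relation.ReflTransGen
          (fun a b => (a ∈ V' ∧ b ∈ V' ∧ Relation.TransGen E a b) ∨ F a b) x z ∧
          Relation.TransGen E z y) ∨
      Relation.TransGen (fun a b => (a ∈ V' ∧ b ∈ V' ∧ Relation.TransGen E a b) ∨ F a b) x y := by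
  set K : V → V → Prop :=
    fun a b => (a ∈ V' ∧ b ∈ V' ∧ Relation.TransGen E a b) ∨ F a b with hK
  have hKend : ∀ a b, K a b → b ∈ V' := by
    rintro a b (⟨_, hb, _⟩ | hf)
    · exact hb
    · exact (hF _ _ hf).2
  have hTKend : ∀ {a b}, Relation.TransGen K a b → b ∈ V' := by
    intro a b ht
    induction ht with
    | single h' => exact hKend _ _ h'
    | tail _ h' _ => exact hKend _ _ h'
  intro x y ht hx
  induction ht with
  | single h' =>
    rcases h' with he | hf
    · exact Or.inl ⟨x, hx, Relation.ReflTransGen.refl, Relation.TransGen.single he⟩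
    · exact Or.inr (Relation.TransGen.single (Or.inr hf))
  | @tail b c _ h' ih =>
    rcases ih with ⟨z, hz, hxz, hzb⟩ | hxb
    · rcases h' with he | hf
      · exact Or.inl ⟨z, hz, hxz, hzb.tail he⟩
      · have hb : b ∈ V' := (hF _ _ hf).1
        have h1 : Relation.TransGen K x b :=
          Relation.TransGen.tail' hxz (Or.inl ⟨hz, hb, hzb⟩)
        exact Or.inr (h1.tail (Or.inr hf))
    · rcases h' with he | hf
      · have hb : b ∈ V' := hTKend hxb
        exact Or.inl ⟨b, hb, hxb.to_reflTransGen, Relation.TransGen.single he⟩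
      · exact Or.inr (hxb.tail (Or.inr hf))

/-- Let `G = (V,E)` be a directed graph with reachability relation `R⁺`
(`Relation.TransGen E`), `V' ⊆ V`, and let `G'` be the graph on `V'` whose
edges are `{(u,v) ∈ V'×V' | (u,v) ∈ R⁺}`.  Let `H` be any graph on `V'`
(all endpoints of `H`-edges lie in `V'`) with the same reachability relation
as `G'` (e.g. a transitive reduction of `G'`).  Then for any set of new
edges `F ⊆ V' × V'`, adding `F` to `G` creates a directed cycle among the
vertices of `V'` iff adding `F` to `H` creates a directed cycle. -/
theorem stmt_5 {V : Type*} (E : V → V → Prop) (V' : Set V)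
    (H : V → V → Prop) (hH : ∀ a b, H a b → a ∈ V' ∧ b ∈ V')
    (hHtc : ∀ a b, Relation.TransGen H a b ↔
      Relation.TransGen (fun x y => x ∈ V' ∧ y ∈ V' ∧ Relation.TransGen E x y) a b)
    (F : V → V → Prop) (hF : ∀ a b, F a b → a ∈ V' ∧ b ∈ V') :
    (∃ v ∈ V', Relation.TransGen (fun a b => E a b ∨ F a b) v v) ↔
      (∃ v, Relation.TransGen (fun a b => H a b ∨ F a b) v v) := by
  set G' : V → V → Prop :=
    fun x y => x ∈ V' ∧ y ∈ V' ∧ Relation.TransGen E x y with hG'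
  have hKtoHF : ∀ {x y}, Relation.TransGen (fun a b => G' a b ∨ F a b) x y →
      Relation.TransGen (fun a b => H a b ∨ F a b) x y := by
    intro x y
    refine tg_mono' ?_
    rintro a b (hg | hf)
    · have : Relation.TransGen H a b := (hHtc a b).mpr (Relation.TransGen.single hg)
      exact tg_mono' (fun _ _ h => Relation.TransGen.single (Or.inl h)) this
    · exact Relation.TransGen.single (Or.inr hf)
  constructor
  · rintro ⟨v, hv, hcyc⟩
    rcases key_decomp E V' F hF hcyc hv with ⟨z, hz, hvz, hzv⟩ | hK
    · have h1 : Relation.TransGen (fun a b => G' a b ∨ F a b) v v :=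
        Relation.TransGen.tail' hvz (Or.inl ⟨hz, hv, hzv⟩)
      exact ⟨v, hKtoHF h1⟩
    · exact ⟨v, hKtoHF hK⟩
  · rintro ⟨v, hcyc⟩
    have hv : v ∈ V' := by
      cases hcyc with
      | single h' =>
        rcases h' with hh | hf
        · exact (hH _ _ hh).2
        · exact (hF _ _ hf).2
      | tail _ h' =>
        rcases h' with hh | hf
        · exact (hH _ _ hh).2
        · exact (hF _ _ hf).2
    refine ⟨v, hv, ?_⟩
    refine tg_mono' ?_ hcyc
    rintro a b (hh | hf)
    · have hg : Relation.TransGen G' a b := (hHtc a b).mp (Relation.TransGen.single hh)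
      have : Relation.TransGen E a b := by
        refine tg_mono' ?_ hg
        rintro c d ⟨_, _, he⟩
        exact he
      exact tg_mono' (fun _ _ h => Relation.TransGen.single (Or.inl h)) this
    · exact Relation.TransGen.single (Or.inr hf)
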